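/- Let a > 0 and R > 0. There exists a constant C > 0, depending only on a and R, such that for all 0 < ε < 1, |∫_{−R}^{R} 1/(ε + a x²)² dx − π/(2√a · ε^{3/2})| ≤ C/√ε. -/

import Mathlib

lemma arctan_lower_aux (s : ℝ) (hs : 0 ≤ s) : s - s ^ 3 ≤ Real.arctan s := by
  have hmono : MonotoneOn (fun t : ℝ => Real.arctan t - t + t ^ 3) (Set.Ici 0) := by
    have hd : ∀ t : ℝ, HasDerivAt (fun t : ℝ => Real.arctan t - t + t ^ 3)
        (1 / (1 + t ^ 2) - 1 + 3 * t ^ 2) t := by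
      intro t
      have h3 : HasDerivAt (fun t : ℝ => t ^ 3) (3 * t ^ 2) t := by
        simpa using hasDerivAt_pow 3 t
      exact ((Real.hasDerivAt_arctan t).sub (hasDerivAt_id t)).add h3
    apply monotoneOn_of_deriv_nonneg (convex_Ici 0)
    · exact ((Real.continuous_arctan.sub continuous_id).add (continuous_pow 3)).continuousOn
    · exact fun t _ => ((hd t).differentiableAt).differentiableWithinAt
    · intro t _
      rw [(hd t).deriv]
      have h1 : (0:ℝ) < 1 + t ^ 2 := by positivity
      have : (1:ℝ) - t ^ 2 ≤ 1 / (1 + t ^ 2) := by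
        rw [le_div_iff₀ h1]; nlinarith
      nlinarith
  have := hmono (Set.self_mem_Ici) (Set.mem_Ici.mpr hs) hs
  simp only [Real.arctan_zero] at this
  nlinarith

lemma arctan_upper_aux (s : ℝ) (hs : 0 ≤ s) : Real.arctan s ≤ s := by
  have hmono : MonotoneOn (fun t : ℝ => t - Real.arctan t) (Set.Ici 0) := by
    have hd : ∀ t : ℝ, HasDerivAt (fun t : ℝ => t - Real.arctan t)
        (1 - 1 / (1 + t ^ 2)) t := fun t =>
      (hasDerivAt_id t).sub (Real.hasDerivAt_arctan t)
    apply monotoneOn_of_deriv_nonneg (convex_Ici 0)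
    · exact (continuous_id.sub Real.continuous_arctan).continuousOn
    · exact fun t _ => ((hd t).differentiableAt).differentiableWithinAt
    · intro t _
      rw [(hd t).deriv]
      have h1 : (0:ℝ) < 1 + t ^ 2 := by positivity
      have : 1 / (1 + t ^ 2) ≤ 1 := by
        rw [div_le_one h1]; nlinarith
      linarith
  have := hmono (Set.self_mem_Ici) (Set.mem_Ici.mpr hs) hs
  simp only [Real.arctan_zero] at this
  linarith

lemma key_integral (a R ε : ℝ) (ha : 0 < a) (hε : 0 < ε) :
    ∫ x in (-R)..R, 1 / (ε + a * x ^ 2) ^ 2 =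
      R / (ε * (ε + a * R ^ 2)) +
        Real.arctan (R * (Real.sqrt a / Real.sqrt ε)) /
          (ε * (Real.sqrt a * Real.sqrt ε)) := by
  set sa := Real.sqrt a with hsa
  set se := Real.sqrt ε with hse
  have hsa0 : 0 < sa := Real.sqrt_pos.mpr ha
  have hse0 : 0 < se := Real.sqrt_pos.mpr hε
  have hsa2 : sa ^ 2 = a := Real.sq_sqrt ha.le
  have hse2 : se ^ 2 = ε := Real.sq_sqrt hε.le
  have hden : ∀ x : ℝ, 0 < ε + a * x ^ 2 := fun x => by positivity
  set F : ℝ → ℝ := fun x => x / (2 * ε * (ε + a * x ^ 2)) +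
    Real.arctan (x * (sa / se)) / (2 * ε * (sa * se)) with hF
  have hderiv : ∀ x ∈ Set.uIcc (-R) R, HasDerivAt F (1 / (ε + a * x ^ 2) ^ 2) x := by
    intro x _
    have h1 : HasDerivAt (fun x : ℝ => x / (2 * ε * (ε + a * x ^ 2)))
        ((2 * ε * (ε + a * x ^ 2) * 1 - x * (2 * ε * (a * (2 * x)))) /
          (2 * ε * (ε + a * x ^ 2)) ^ 2) x := by
      have hdd : HasDerivAt (fun x : ℝ => 2 * ε * (ε + a * x ^ 2))
          (2 * ε * (a * (2 * x))) x := by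
        have h0 : HasDerivAt (fun x : ℝ => ε + a * x ^ 2) (a * (2 * x)) x := by
          have := ((hasDerivAt_pow 2 x).const_mul a).const_add ε
          simpa using this
        simpa [mul_comm, mul_assoc, mul_left_comm] using h0.const_mul (2 * ε)
      have hne : 2 * ε * (ε + a * x ^ 2) ≠ 0 := by positivity
      simpa [Pi.div_def] using (hasDerivAt_id x).div hdd hne
    have h2 : HasDerivAt (fun x : ℝ => Real.arctan (x * (sa / se)) / (2 * ε * (sa * se)))
        ((1 / (1 + (x * (sa / se)) ^ 2) * (sa / se)) / (2 * ε * (sa * se))) x := by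
      have hc : HasDerivAt (fun x : ℝ => x * (sa / se)) (sa / se) x := by
        simpa using (hasDerivAt_id x).mul_const (sa / se)
      exact ((Real.hasDerivAt_arctan (x * (sa / se))).comp x hc).div_const _
    have hsum := h1.add h2
    refine hsum.congr_deriv (Eq.symm ?_)
    rw [← hsa2, ← hse2]
    have hd2 : se ^ 2 + sa ^ 2 * x ^ 2 ≠ 0 := by positivity
    field_simp
    ring
  have hint : IntervalIntegrable (fun x => 1 / (ε + a * x ^ 2) ^ 2)
      MeasureTheory.volume (-R) R := by
    apply Continuous.intervalIntegrable
    exact continuous_const.div (by continuity) (fun x => by positivity)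
  rw [intervalIntegral.integral_eq_sub_of_hasDerivAt hderiv hint]
  have hodd : F R - F (-R) = 2 * F R := by
    simp only [hF, neg_mul, Real.arctan_neg, neg_sq]
    ring
  rw [hodd]
  simp only [hF]
  have hne1 : ε + a * R ^ 2 > 0 := by positivity
  rw [mul_add]
  congr 1
  · field_simp
  · field_simp

theorem stmt_3 (a R : ℝ) (ha : 0 < a) (hR : 0 < R) :
    ∃ C > 0, ∀ ε : ℝ, 0 < ε → ε < 1 →
      |(∫ x in (-R)..R, 1 / (ε + a * x ^ 2) ^ 2) -
          Real.pi / (2 * Real.sqrt a * ε ^ ((3 : ℝ) / 2))| ≤ C / Real.sqrt ε := by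
  refine ⟨2 / (a ^ 2 * R ^ 3), by positivity, ?_⟩
  intro ε hε hε1
  set sa := Real.sqrt a with hsa
  set se := Real.sqrt ε with hse
  have hsa0 : 0 < sa := Real.sqrt_pos.mpr ha
  have hse0 : 0 < se := Real.sqrt_pos.mpr hε
  have hsa2 : sa ^ 2 = a := Real.sq_sqrt ha.le
  have hse2 : se ^ 2 = ε := Real.sq_sqrt hε.le
  have hse1 : se ≤ 1 := by
    rw [hse, show (1:ℝ) = Real.sqrt 1 by simp]
    exact Real.sqrt_le_sqrt hε1.le
  have hrpow : ε ^ ((3:ℝ)/2) = ε * se := by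
    rw [show (3:ℝ)/2 = 1 + 1/2 by norm_num, Real.rpow_add hε, Real.rpow_one,
      ← Real.sqrt_eq_rpow]
  rw [key_integral a R ε ha hε, hrpow]
  -- rewrite arctan via the inverse identity
  set s : ℝ := se / (R * sa) with hs
  have hs0 : 0 < s := by positivity
  have hRc : 0 < R * (sa / se) := by positivity
  have hinv : (R * (sa / se))⁻¹ = s := by
    rw [hs]; field_simp
  have harc : Real.arctan (R * (sa / se)) = Real.pi / 2 - Real.arctan s := by
    have h1 : Real.arctan s = Real.pi / 2 - Real.arctan (R * (sa / se)) := by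
      rw [← hinv]; exact Real.arctan_inv_of_pos hRc
    linarith
  rw [harc]
  -- key algebraic identity
  have hden : (0:ℝ) < ε + a * R ^ 2 := by positivity
  have hkey : R / (ε * (ε + a * R ^ 2)) +
      (Real.pi / 2 - Real.arctan s) / (ε * (sa * se)) -
      Real.pi / (2 * sa * (ε * se)) =
      -(1 / (a * R * (ε + a * R ^ 2))) + (s - Real.arctan s) / (ε * (sa * se)) := by
    have hA : Real.arctan s = Real.arctan s := rfl
    rw [hs, ← hsa2, ← hse2]
    have hd2 : se ^ 2 + sa ^ 2 * R ^ 2 ≠ 0 := by positivity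
    field_simp
    ring
  rw [hkey]
  have harc_le : Real.arctan s ≤ s := arctan_upper_aux s hs0.le
  have harc_ge : s - s ^ 3 ≤ Real.arctan s := arctan_lower_aux s hs0.le
  have hterm2 : 0 ≤ (s - Real.arctan s) / (ε * (sa * se)) := by
    apply div_nonneg _ (by positivity)
    linarith
  have hterm2' : (s - Real.arctan s) / (ε * (sa * se)) ≤ 1 / (a ^ 2 * R ^ 3) := by
    have h1 : s - Real.arctan s ≤ s ^ 3 := by linarith
    have h2 : (s - Real.arctan s) / (ε * (sa * se)) ≤ s ^ 3 / (ε * (sa * se)) := by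
      apply div_le_div_of_nonneg_right h1 (by positivity) |>.trans_eq rfl
    refine h2.trans ?_
    have : s ^ 3 / (ε * (sa * se)) = 1 / (a ^ 2 * R ^ 3) := by
      rw [hs, ← hsa2, ← hse2]
      field_simp
    rw [this]
  have hterm1 : 1 / (a * R * (ε + a * R ^ 2)) ≤ 1 / (a ^ 2 * R ^ 3) := by
    apply one_div_le_one_div_of_le (by positivity)
    nlinarith [mul_pos (mul_pos ha hR) hε]
  have habs : |(-(1 / (a * R * (ε + a * R ^ 2))) + (s - Real.arctan s) / (ε * (sa * se)))| ≤
      2 / (a ^ 2 * R ^ 3) := by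
    have h2e : 2 / (a ^ 2 * R ^ 3) = 2 * (1 / (a ^ 2 * R ^ 3)) := by ring
    have h0 : 0 < 1 / (a * R * (ε + a * R ^ 2)) := by positivity
    have h0' : 0 < 1 / (a ^ 2 * R ^ 3) := by positivity
    rw [abs_le]
    constructor
    · linarith
    · linarith
  refine habs.trans ?_
  rw [le_div_iff₀ hse0]
  exact mul_le_of_le_one_right (by positivity) hse1
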